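/- Let β₂ be a satisfiable finite set of atomic comparisons over V and let D₁, …, Dₖ be finite nonempty sets of closed LSI ACs (each member of each Dᵢ is of the form x ≤ c). Then β₂ entails the disjunction ⋁ᵢ (⋀ Dᵢ) if and only if there exists a single i such that β₂ entails every AC in Dᵢ. -/
import Mathlib


namespace QC

/-- A term is a variable in `V` or a real constant. -/
inductive Term (V : Type) where
  | var : V → Term V
  | const : ℝ → Term V

/-- The comparison relations `<, ≤, =, ≠`. -/
inductive Rel where
  | lt | le | eq | ne

/-- A comparison between two terms.  (`x ≥ c` is represented as `c ≤ x`, etc.) -/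
structure Comp (V : Type) where
  rel : Rel
  lhs : Term V
  rhs : Term V

def Term.eval {V : Type} (σ : V → ℝ) : Term V → ℝ
  | .var x => σ x
  | .const c => c

def Rel.holds : Rel → ℝ → ℝ → Prop
  | .lt => fun a b => a < b
  | .le => fun a b => a ≤ b
  | .eq => fun a b => a = b
  | .ne => fun a b => a ≠ b

/-- An assignment `σ : V → ℝ` satisfies a comparison. -/
def Comp.holds {V : Type} (a : Comp V) (σ : V → ℝ) : Prop :=
  a.rel.holds (a.lhs.eval σ) (a.rhs.eval σ)

def Term.isVar {V : Type} : Term V → Prop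
  | .var _ => True
  | .const _ => False

/-- An atomic comparison: at least one side is a variable. -/
def IsAC {V : Type} (a : Comp V) : Prop := a.lhs.isVar ∨ a.rhs.isVar

/-- `σ` satisfies every comparison in the finite set `F`. -/
def Sat {V : Type} (F : Finset (Comp V)) (σ : V → ℝ) : Prop := ∀ a ∈ F, a.holds σ

/-- A closed LSI comparison: `x ≤ c`. -/
def IsClosedLSI {V : Type} (a : Comp V) : Prop :=
  ∃ (x : V) (c : ℝ), a = ⟨Rel.le, Term.var x, Term.const c⟩

/-- An open LSI comparison: `x < c`. -/
def IsOpenLSI {V : Type} (a : Comp V) : Prop :=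
  ∃ (x : V) (c : ℝ), a = ⟨Rel.lt, Term.var x, Term.const c⟩

/-- A closed RSI comparison: `x ≥ c`, represented as `c ≤ x`. -/
def IsClosedRSI {V : Type} (a : Comp V) : Prop :=
  ∃ (x : V) (c : ℝ), a = ⟨Rel.le, Term.const c, Term.var x⟩

/-- An open RSI comparison: `x > c`, represented as `c < x`. -/
def IsOpenRSI {V : Type} (a : Comp V) : Prop :=
  ∃ (x : V) (c : ℝ), a = ⟨Rel.lt, Term.const c, Term.var x⟩

/-- homomorphism property for closed LSI containing queries:
a satisfiable `β₂` entails `⋁ᵢ (⋀ Dᵢ)`, where each `Dᵢ` consists of closed LSI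
comparisons, iff a single `Dᵢ` is fully entailed by `β₂`. -/
theorem stmt8 {V : Type} (β₂ : Finset (Comp V))
    (hAC : ∀ a ∈ β₂, IsAC a)
    (hsat : ∃ σ : V → ℝ, Sat β₂ σ)
    (k : ℕ) (D : Fin k → Finset (Comp V))
    (hDne : ∀ i, (D i).Nonempty)
    (hD : ∀ i, ∀ a ∈ D i, IsClosedLSI a) :
    (∀ σ : V → ℝ, Sat β₂ σ → ∃ i, ∀ a ∈ D i, a.holds σ) ↔
    (∃ i, ∀ a ∈ D i, ∀ σ : V → ℝ, Sat β₂ σ → a.holds σ) := by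
  constructor
  · intro hL
    obtain ⟨σ₀, hσ₀⟩ := hsat
    obtain ⟨i₀, _⟩ := hL σ₀ hσ₀
    haveI : Nonempty (Fin k) := ⟨i₀⟩
    by_contra hR
    push_neg at hR
    -- hR : ∀ i, ∃ a ∈ D i, ∃ σ, Sat β₂ σ ∧ ¬a.holds σ
    choose a ha σs hσs hviol using hR
    choose x c hxc using fun i => hD i (a i) (ha i)
    have hgt : ∀ i, c i < σs i (x i) := by
      intro i
      have h := hviol i
      rw [hxc i] at h
      simpa [Comp.holds, Term.eval, Rel.holds, not_le] using h
    set τ : V → ℝ := fun v => Finset.univ.sup' Finset.univ_nonempty (fun i => σs i v) with hτdef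
    have hle : ∀ i v, σs i v ≤ τ v := fun i v =>
      Finset.le_sup' (fun j => σs j v) (Finset.mem_univ i)
    have hattain : ∀ v, ∃ j, τ v = σs j v := by
      intro v
      obtain ⟨j, _, hj⟩ := Finset.exists_mem_eq_sup' Finset.univ_nonempty (fun i => σs i v)
      exact ⟨j, hj⟩
    have tle : ∀ (j : Fin k) (t : Term V), t.eval (σs j) ≤ t.eval τ := by
      intro j t; cases t with
      | var v => exact hle j v
      | const cc => exact le_refl _
    have tattain : ∀ t : Term V, ∃ j, t.eval τ = t.eval (σs j) := by
      intro t; cases t with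
      | var v => exact hattain v
      | const cc => exact ⟨i₀, rfl⟩
    -- τ satisfies all non-ne constraints of β₂
    have hτsat : ∀ b ∈ β₂, b.rel ≠ Rel.ne → b.holds τ := by
      rintro ⟨r, l, rh⟩ hb hne
      have hall : ∀ i, Comp.holds ⟨r, l, rh⟩ (σs i) := fun i => hσs i _ hb
      obtain ⟨j, hj⟩ := tattain l
      obtain ⟨j', hj'⟩ := tattain rh
      cases r with
      | lt =>
        have h1 := hall j
        simp only [Comp.holds, Rel.holds] at h1 ⊢
        calc l.eval τ = l.eval (σs j) := hj
          _ < rh.eval (σs j) := h1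
          _ ≤ rh.eval τ := tle j rh
      | le =>
        have h1 := hall j
        simp only [Comp.holds, Rel.holds] at h1 ⊢
        calc l.eval τ = l.eval (σs j) := hj
          _ ≤ rh.eval (σs j) := h1
          _ ≤ rh.eval τ := tle j rh
      | eq =>
        have h1 := hall j
        have h2 := hall j'
        simp only [Comp.holds, Rel.holds] at h1 h2 ⊢
        apply le_antisymm
        · calc l.eval τ = l.eval (σs j) := hj
            _ = rh.eval (σs j) := h1
            _ ≤ rh.eval τ := tle j rh
        · calc rh.eval τ = rh.eval (σs j') := hj'
            _ = l.eval (σs j') := h2.symm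
            _ ≤ l.eval τ := tle j' l
      | ne => exact absurd rfl hne
    have hτgt : ∀ i, c i < τ (x i) := fun i => lt_of_lt_of_le (hgt i) (hle i (x i))
    -- choose perturbation parameter
    set ε : ℝ := Finset.univ.inf' Finset.univ_nonempty (fun i => τ (x i) - c i) with hεdef
    have hε : 0 < ε :=
      (Finset.lt_inf'_iff _).mpr fun i _ => sub_pos.mpr (hτgt i)
    set M : ℝ := Finset.univ.sup' Finset.univ_nonempty (fun i => |σ₀ (x i) - τ (x i)|) with hMdef
    have hM0 : 0 ≤ M :=
      le_trans (abs_nonneg _) (Finset.le_sup' (fun i => |σ₀ (x i) - τ (x i)|) (Finset.mem_univ i₀))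
    set δ : ℝ := ε / (M + 1) with hδdef
    have hδ : 0 < δ := div_pos hε (by linarith)
    set f : Comp V → ℝ := fun b =>
      (b.lhs.eval τ - b.rhs.eval τ) / ((b.lhs.eval τ - b.rhs.eval τ) - (b.lhs.eval σ₀ - b.rhs.eval σ₀)) with hfdef
    have hinf : (Set.Ioo (0:ℝ) (min δ 1)).Infinite := Set.Ioo_infinite (lt_min hδ one_pos)
    obtain ⟨t, ht⟩ := (hinf.diff (β₂.image f).finite_toSet).nonempty
    obtain ⟨htIoo, htB⟩ := ht
    have ht0 : 0 < t := htIoo.1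
    have ht1 : t < 1 := lt_of_lt_of_le htIoo.2 (min_le_right _ _)
    have htδ : t < δ := lt_of_lt_of_le htIoo.2 (min_le_left _ _)
    set σ' : V → ℝ := fun v => (1 - t) * τ v + t * σ₀ v with hσ'def
    have heval : ∀ tm : Term V, tm.eval σ' = (1 - t) * tm.eval τ + t * tm.eval σ₀ := by
      intro tm; cases tm with
      | var v => rfl
      | const cc => simp [Term.eval]; ring
    have hSat : Sat β₂ σ' := by
      rintro ⟨r, l, rh⟩ hb
      have h0 := hσ₀ _ hb
      cases r with
      | lt =>
        have hτb := hτsat _ hb (by simp)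
        simp only [Comp.holds, Rel.holds, heval] at h0 hτb ⊢
        nlinarith
      | le =>
        have hτb := hτsat _ hb (by simp)
        simp only [Comp.holds, Rel.holds, heval] at h0 hτb ⊢
        nlinarith
      | eq =>
        have hτb := hτsat _ hb (by simp)
        simp only [Comp.holds, Rel.holds, heval] at h0 hτb ⊢
        rw [h0, hτb]
      | ne =>
        simp only [Comp.holds, Rel.holds, heval] at h0 ⊢
        intro hEq
        set A : ℝ := l.eval τ - rh.eval τ with hA
        set B : ℝ := l.eval σ₀ - rh.eval σ₀ with hB
        have hB0 : B ≠ 0 := sub_ne_zero.mpr h0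
        have hlin : (1 - t) * A + t * B = 0 := by rw [hA, hB]; linarith
        by_cases hAB : A = B
        · rw [hAB] at hlin
          apply hB0
          linarith [hlin]
        · have hABne : A - B ≠ 0 := sub_ne_zero.mpr hAB
          have htval : t = A / (A - B) := by
            rw [eq_div_iff hABne]; linarith
          apply htB
          have : f ⟨Rel.ne, l, rh⟩ = t := by
            simp only [hfdef, ← hA, ← hB]
            exact htval.symm
          rw [← this]
          exact Finset.mem_coe.mpr (Finset.mem_image_of_mem f hb)
    obtain ⟨i, hi⟩ := hL σ' hSat
    have hholds := hi (a i) (ha i)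
    rw [hxc i] at hholds
    simp only [Comp.holds, Term.eval, Rel.holds, hσ'def] at hholds
    -- hholds : (1 - t) * τ (x i) + t * σ₀ (x i) ≤ c i
    have hεle : ε ≤ τ (x i) - c i :=
      Finset.inf'_le (fun j => τ (x j) - c j) (Finset.mem_univ i)
    have habs : |σ₀ (x i) - τ (x i)| ≤ M :=
      Finset.le_sup' (fun j => |σ₀ (x j) - τ (x j)|) (Finset.mem_univ i)
    have h1 : τ (x i) - σ₀ (x i) ≤ M := by
      have := neg_abs_le (σ₀ (x i) - τ (x i))
      linarith [habs]
    have h3 : t * (M + 1) < ε := by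
      rw [hδdef] at htδ
      exact (lt_div_iff₀ (by linarith)).mp htδ
    nlinarith [mul_le_mul_of_nonneg_left h1 ht0.le]
  · rintro ⟨i, hi⟩ σ hσ
    exact ⟨i, fun a haD => hi a haD σ hσ⟩

end QC
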